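/- Let $A$ be a unital complex Banach algebra, $p$ a polynomial with distinct roots, and $a_0 \in E_p(A) = \{a : p(a)=0\}$. Then $a_0$ lies in the center of $A$ if and only if $\{a_0\}$ is the connected component of $a_0$ in $E_p(A)$ (i.e., $a_0$ is isolated in $E_p(A)$). -/

import Mathlib

set_option linter.unusedSectionVars false

open Polynomial NormedSpace

section Aux

variable {A : Type*} [NormedRing A] [NormedAlgebra ℂ A] [CompleteSpace A] [NormOneClass A]

/-- Conjugation by an invertible pair as an algebra hom. -/
def conjHom (u v : A) (huv : u * v = 1) (hvu : v * u = 1) : A →ₐ[ℂ] A where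
  toFun a := u * a * v
  map_one' := by show u * 1 * v = 1; rw [mul_one, huv]
  map_mul' a b := by
    show u * (a * b) * v = (u * a * v) * (u * b * v)
    symm
    calc u * a * v * (u * b * v) = u * a * (v * u) * b * v := by noncomm_ring
      _ = u * (a * b) * v := by rw [hvu]; noncomm_ring
  map_zero' := by show u * 0 * v = 0; simp
  map_add' a b := by show u * (a + b) * v = u * a * v + u * b * v; noncomm_ring
  commutes' c := by
    show u * algebraMap ℂ A c * v = algebraMap ℂ A c
    rw [Algebra.algebraMap_eq_smul_one, mul_smul_comm, mul_one, smul_mul_assoc, huv]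

end Aux

section Aux2

variable {A : Type*} [NormedRing A] [NormedAlgebra ℂ A] [CompleteSpace A] [NormOneClass A]

noncomputable def Sfun (p : ℂ[X]) (a₀ a : A) : A :=
  ∑ k ∈ p.support, p.coeff k • ∑ j ∈ Finset.range k, a ^ j * a₀ ^ (k - 1 - j)

theorem aeval_eq_supp_sum (p : ℂ[X]) (a : A) :
    aeval a p = ∑ k ∈ p.support, p.coeff k • a ^ k := by
  rw [aeval_def, eval₂_eq_sum, Polynomial.sum]
  simp_rw [Algebra.smul_def]

theorem sub_mul_Sfun (p : ℂ[X]) (a₀ a : A) (h : Commute a a₀) :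
    (a - a₀) * Sfun p a₀ a = aeval a p - aeval a₀ p := by
  rw [Sfun, Finset.mul_sum, aeval_eq_supp_sum, aeval_eq_supp_sum, ← Finset.sum_sub_distrib]
  refine Finset.sum_congr rfl fun k _ => ?_
  rw [mul_smul_comm, h.mul_geom_sum₂, smul_sub]

theorem Sfun_self (p : ℂ[X]) (a₀ : A) :
    Sfun p a₀ a₀ = aeval a₀ (derivative p) := by
  rw [Sfun, derivative_apply, Polynomial.sum, map_sum]
  refine Finset.sum_congr rfl fun k _ => ?_
  have h1 : ∀ j ∈ Finset.range k, a₀ ^ j * a₀ ^ (k - 1 - j) = a₀ ^ (k - 1) := by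
    intro j hj
    rw [← pow_add]
    congr 1
    have := Finset.mem_range.mp hj
    omega
  rw [Finset.sum_congr rfl h1, Finset.sum_const, Finset.card_range,
    map_mul, aeval_C, map_pow, aeval_X]
  rw [← Nat.cast_smul_eq_nsmul ℂ, smul_smul, Algebra.smul_def, map_mul]

theorem continuous_Sfun (p : ℂ[X]) (a₀ : A) : Continuous (fun a => Sfun p a₀ a) := by
  unfold Sfun
  refine continuous_finset_sum _ fun k _ => ?_
  refine Continuous.const_smul ?_ _
  exact continuous_finset_sum _ fun j _ => (continuous_pow j).mul continuous_const

end Aux2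

section Aux3

variable {A : Type*} [NormedRing A] [NormedAlgebra ℂ A] [CompleteSpace A] [NormOneClass A]

theorem nontrivial_of_normOne : Nontrivial A := by
  refine nontrivial_of_ne 1 0 fun h => ?_
  have h1 := norm_one (α := A)
  rw [h, norm_zero] at h1
  exact one_ne_zero h1.symm

theorem isUnit_aeval_deriv {n : ℕ} (l : Fin n → ℂ) (hl : Function.Injective l) (a₀ : A)
    (h : aeval a₀ (∏ i : Fin n, (X - C (l i))) = 0) :
    IsUnit (aeval a₀ (derivative (∏ i : Fin n, (X - C (l i))))) := by
  haveI : Nontrivial A := nontrivial_of_normOne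
  set p : ℂ[X] := ∏ i : Fin n, (X - C (l i)) with hp
  obtain ⟨u, v, huv⟩ : IsCoprime p (derivative p) :=
    (separable_prod_X_sub_C_iff.mpr hl : p.Separable)
  apply spectrum.isUnit_of_zero_notMem (R := ℂ)
  rw [spectrum.map_polynomial_aeval]
  rintro ⟨z, hz, hz0⟩
  have hzp : eval z p = 0 := by
    have h1 : eval z p ∈ spectrum ℂ (aeval a₀ p) := by
      rw [spectrum.map_polynomial_aeval]
      exact ⟨z, hz, rfl⟩
    rw [h, spectrum.zero_eq] at h1
    exact h1
  have := congrArg (eval z) huv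
  simp only [eval_add, eval_mul, eval_one, hzp, hz0, mul_zero, add_zero] at this
  exact one_ne_zero this.symm

end Aux3

/-- An element `a₀ ∈ E_p(A)` is central if and only if it is isolated in
`E_p(A)`, i.e. its connected component in `E_p(A)` is the singleton `{a₀}`. -/
theorem stmt10 {A : Type*} [NormedRing A] [NormedAlgebra ℂ A] [CompleteSpace A] [NormOneClass A]
    (n : ℕ) (hn : 2 ≤ n) (l : Fin n → ℂ) (hl : Function.Injective l)
    (Ep : Set A) (hEp : Ep = {a : A | aeval a (∏ i : Fin n, (X - C (l i))) = 0})
    (a₀ : A) (ha₀ : a₀ ∈ Ep) :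
    (∀ x : A, a₀ * x = x * a₀) ↔ connectedComponentIn Ep a₀ = {a₀} := by
  set p : ℂ[X] := ∏ i : Fin n, (X - C (l i)) with hp
  have hpa₀ : aeval a₀ p = 0 := by rw [hEp] at ha₀; exact ha₀
  constructor
  · intro hcentral
    have hd : IsUnit (Sfun p a₀ a₀) := by
      rw [Sfun_self]; exact isUnit_aeval_deriv l hl a₀ hpa₀
    set U : Set A := (fun a => Sfun p a₀ a) ⁻¹' {y | IsUnit y} with hU
    have hUopen : IsOpen U := Units.isOpen.preimage (continuous_Sfun p a₀)
    have key : ∀ a ∈ Ep, a ∈ U → a = a₀ := by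
      intro a haE haU
      have h1 : (a - a₀) * Sfun p a₀ a = 0 := by
        rw [sub_mul_Sfun p a₀ a ((hcentral a).symm)]
        rw [hEp] at haE
        rw [haE, hpa₀, sub_zero]
      have h2 : (a - a₀) * Sfun p a₀ a = 0 * Sfun p a₀ a := by rw [h1, zero_mul]
      have h3 := (haU : IsUnit (Sfun p a₀ a)).mul_right_cancel h2
      rw [sub_eq_zero] at h3
      exact h3
    refine Set.eq_of_subset_of_subset ?_ ?_
    · intro b hb
      by_contra hbne
      have hC : IsPreconnected (connectedComponentIn Ep a₀) := isPreconnected_connectedComponentIn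
      have hcov : connectedComponentIn Ep a₀ ⊆ U ∪ {a₀}ᶜ := by
        intro a _
        by_cases ha : a = a₀
        · left; rw [ha]; exact hd
        · right; exact ha
      obtain ⟨c, hcC, hcU, hcne⟩ :=
        hC U {a₀}ᶜ hUopen isOpen_compl_singleton hcov
          ⟨a₀, mem_connectedComponentIn ha₀, hd⟩ ⟨b, hb, hbne⟩
      exact hcne (key c (connectedComponentIn_subset _ _ hcC) hcU)
    · exact Set.singleton_subset_iff.mpr (mem_connectedComponentIn ha₀)
  · intro hcc x
    set u : ℂ → A := fun t => NormedSpace.exp (t • x) with hu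
    have hmul : ∀ t : ℂ, u t * NormedSpace.exp (-(t • x)) = 1 := fun t => by
      rw [hu, ← NormedSpace.exp_add_of_commute_of_mem_ball (𝕂 := ℂ) ((Commute.refl (t • x)).neg_right)
        ((expSeries_radius_eq_top ℂ A).symm ▸ edist_lt_top _ _)
        ((expSeries_radius_eq_top ℂ A).symm ▸ edist_lt_top _ _),
        add_neg_cancel, NormedSpace.exp_zero]
    have hmul' : ∀ t : ℂ, NormedSpace.exp (-(t • x)) * u t = 1 := fun t => by
      rw [hu, ← NormedSpace.exp_add_of_commute_of_mem_ball (𝕂 := ℂ) ((Commute.refl (t • x)).neg_left)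
        ((expSeries_radius_eq_top ℂ A).symm ▸ edist_lt_top _ _)
        ((expSeries_radius_eq_top ℂ A).symm ▸ edist_lt_top _ _),
        neg_add_cancel, NormedSpace.exp_zero]
    set g : ℂ → A := fun t => u t * a₀ * NormedSpace.exp (-(t • x)) with hg
    have hg_mem : ∀ t : ℂ, g t ∈ Ep := by
      intro t
      rw [hEp]
      show aeval (g t) p = 0
      have h1 : g t = conjHom (u t) (NormedSpace.exp (-(t • x))) (hmul t) (hmul' t) a₀ := rfl
      rw [h1, aeval_algHom_apply, hpa₀, map_zero]
    have hcu : Continuous u := by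
      rw [continuous_iff_continuousAt]
      exact fun t => (hasDerivAt_exp_smul_const x t).continuousAt
    have hcu' : Continuous fun t : ℂ => NormedSpace.exp (-(t • x)) := by
      have : (fun t : ℂ => NormedSpace.exp (-(t • x)))
          = fun t : ℂ => NormedSpace.exp (t • (-x)) := by
        funext t; rw [smul_neg]
      rw [this, continuous_iff_continuousAt]
      exact fun t => (hasDerivAt_exp_smul_const (-x) t).continuousAt
    have hcg : Continuous g := (hcu.mul continuous_const).mul hcu'
    have himg : Set.range g ⊆ connectedComponentIn Ep a₀ := by
      have hpre : IsPreconnected (Set.range g) := by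
        rw [← Set.image_univ]
        exact isPreconnected_univ.image g hcg.continuousOn
      have hg0 : a₀ ∈ Set.range g := by
        refine ⟨0, ?_⟩
        show u 0 * a₀ * NormedSpace.exp (-((0:ℂ) • x)) = a₀
        rw [hu]
        simp only [zero_smul, neg_zero, NormedSpace.exp_zero, one_mul, mul_one]
      exact hpre.subset_connectedComponentIn hg0 (Set.range_subset_iff.mpr hg_mem)
    rw [hcc] at himg
    have hgt : ∀ t : ℂ, g t = a₀ := fun t => himg ⟨t, rfl⟩
    have hcomm : (fun t : ℂ => u t * a₀) = fun t : ℂ => a₀ * u t := by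
      funext t
      calc u t * a₀ = u t * a₀ * (NormedSpace.exp (-(t • x)) * u t) := by
            rw [hmul' t, mul_one]
        _ = g t * u t := by rw [hg]; noncomm_ring
        _ = a₀ * u t := by rw [hgt t]
    have h1 : HasDerivAt (fun t : ℂ => NormedSpace.exp (t • x))
        (NormedSpace.exp ((0:ℂ) • x) * x) 0 := hasDerivAt_exp_smul_const x 0
    have hL : HasDerivAt (fun t : ℂ => u t * a₀) (NormedSpace.exp ((0:ℂ) • x) * x * a₀) 0 :=
      h1.mul_const a₀
    have hR : HasDerivAt (fun t : ℂ => a₀ * u t) (a₀ * (NormedSpace.exp ((0:ℂ) • x) * x)) 0 :=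
      h1.const_mul a₀
    rw [hcomm] at hL
    have h2 := hL.unique hR
    simp only [zero_smul, NormedSpace.exp_zero, one_mul] at h2
    exact h2.symm
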